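/- Under the standing assumptions, fix a Borel probability measure P on X×Y, λ > 0, and a point (x₀,y₀) ∈ X×Y, and set P_ε := (1−ε)P + ε·δ_{(x₀,y₀)} for ε ∈ [0,1), where δ_{(x₀,y₀)} is the Dirac measure. Then the influence function IF((x₀,y₀); S, P) := lim_{ε→0⁺} (f_{L*,P_ε,λ} − f_{L*,P,λ})/ε exists in H, satisfies M(P)(IF) = −T(δ_{(x₀,y₀)};P) where T(δ_{(x₀,y₀)};P) = −2∫ L'·Φ d(P⊗P) + ∫ [L'(x,y,x₀,y₀)·Φ(x,x₀) + L'(x₀,y₀,x',y')·Φ(x₀,x')] d(P⊗P) with L' the partial derivative D₅L evaluated along f̂_{L*,P,λ}, and its norm is bounded uniformly in (x₀,y₀): ‖IF((x₀,y₀); S, P)‖_H ≤ (8/λ)·‖k‖_∞·|L|₁. -/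

import Mathlib

open MeasureTheory

/-- The function on `X × X` induced by an element `f` of the RKHS with feature map `Φ`:
`f̂(x,x') = ⟪f, Φ(x,x')⟫_H` (reproducing property). -/
noncomputable def fhat {X H : Type*} [NormedAddCommGroup H] [InnerProductSpace ℝ H]
    (Φ : X × X → H) (f : H) : X × X → ℝ :=
  fun p => @inner ℝ H _ f (Φ p)

/-- The shifted risk `R_{L*,P}(f) = ∫ L(x,y,x',y',f(x,x')) - L(x,y,x',y',0) d(P⊗P)`. -/
noncomputable def shiftedRisk {X Y : Type*} [MeasurableSpace X] [MeasurableSpace Y]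
    (L : X → Y → X → Y → ℝ → ℝ) (P : Measure (X × Y)) (f : X × X → ℝ) : ℝ :=
  ∫ z : (X × Y) × (X × Y),
    (L z.1.1 z.1.2 z.2.1 z.2.2 (f (z.1.1, z.2.1)) - L z.1.1 z.1.2 z.2.1 z.2.2 0) ∂(P.prod P)

/-- The regularized shifted risk `R^reg_{L*,P,λ}(f) = R_{L*,P}(f̂) + λ‖f‖²` for `f ∈ H`. -/
noncomputable def regRisk {X Y H : Type*} [MeasurableSpace X] [MeasurableSpace Y]
    [NormedAddCommGroup H] [InnerProductSpace ℝ H]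
    (L : X → Y → X → Y → ℝ → ℝ) (Φ : X × X → H) (P : Measure (X × Y))
    (lam : ℝ) (f : H) : ℝ :=
  shiftedRisk L P (fhat Φ f) + lam * ‖f‖ ^ 2

open Filter Topology

section AuxIF

open RealInnerProductSpace

/-- Bounded + a.e. strongly measurable on a finite measure implies integrable. -/
theorem IFaux.integrable_bdd {α E : Type*} [MeasurableSpace α] {μ : Measure α}
    [IsFiniteMeasure μ] [NormedAddCommGroup E] {f : α → E} (hf : AEStronglyMeasurable f μ)
    {C : ℝ} (h : ∀ a, ‖f a‖ ≤ C) : Integrable f μ :=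
  Integrable.mono (integrable_const C) hf (ae_of_all _ fun a => (h a).trans (le_abs_self C))

theorem IFaux.smul_prod {α β : Type*} [MeasurableSpace α] [MeasurableSpace β] (μ : Measure α)
    (ν : Measure β) [SFinite μ] [SFinite ν] (c : ENNReal) : (c • μ).prod ν = c • (μ.prod ν) := by
  ext s hs
  rw [Measure.prod_apply hs, Measure.smul_apply, Measure.prod_apply hs, smul_eq_mul,
    lintegral_smul_measure, smul_eq_mul]

theorem IFaux.prod_smul {α β : Type*} [MeasurableSpace α] [MeasurableSpace β] (μ : Measure α)
    (ν : Measure β) [SFinite μ] [SFinite ν] (c : ENNReal) (hc : c ≠ ⊤) :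
    μ.prod (c • ν) = c • (μ.prod ν) := by
  ext s hs
  rw [Measure.prod_apply hs, Measure.smul_apply, Measure.prod_apply hs, smul_eq_mul,
    ← lintegral_const_mul' _ _ hc]
  simp

/-- The pointwise derivative of a jointly measurable family is jointly measurable. -/
theorem IFaux.measurable_deriv {Z : Type*} [MeasurableSpace Z] (F F' : Z → ℝ → ℝ)
    (hF : Measurable (fun p : Z × ℝ => F p.1 p.2))
    (hd : ∀ z t, HasDerivAt (F z) (F' z t) t) :
    Measurable (fun p : Z × ℝ => F' p.1 p.2) := by
  have key : ∀ p : Z × ℝ, Tendsto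
      (fun n : ℕ => (F p.1 (p.2 + ((n : ℝ) + 1)⁻¹) - F p.1 p.2) * (((n : ℝ) + 1)⁻¹)⁻¹)
      atTop (𝓝 (F' p.1 p.2)) := by
    intro p
    have h1 := hasDerivAt_iff_tendsto_slope.1 (hd p.1 p.2)
    have h2 : Tendsto (fun n : ℕ => p.2 + ((n : ℝ) + 1)⁻¹) atTop (𝓝[≠] p.2) := by
      apply tendsto_nhdsWithin_of_tendsto_nhds_of_eventually_within
      · have : Tendsto (fun n : ℕ => ((n : ℝ) + 1)⁻¹) atTop (𝓝 0) :=
          tendsto_one_div_add_atTop_nhds_zero_nat.congr (by intro n; rw [one_div])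
        simpa using tendsto_const_nhds.add this
      · filter_upwards with n
        have : (0 : ℝ) < ((n : ℝ) + 1)⁻¹ := by positivity
        simp only [Set.mem_compl_iff, Set.mem_singleton_iff]
        intro h
        nlinarith [congrArg (fun x => x - p.2) h]
    have := h1.comp h2
    apply this.congr
    intro n
    simp only [Function.comp_apply]
    have he : p.2 + ((n : ℝ) + 1)⁻¹ - p.2 = ((n : ℝ) + 1)⁻¹ := by ring
    rw [slope_def_field, he, div_eq_mul_inv]
  apply measurable_of_tendsto_metrizable' atTop
    (f := fun (n : ℕ) (p : Z × ℝ) =>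
      (F p.1 (p.2 + ((n : ℝ) + 1)⁻¹) - F p.1 p.2) * (((n : ℝ) + 1)⁻¹)⁻¹)
  · intro n
    exact ((hF.comp (measurable_fst.prodMk (measurable_snd.add_const _))).sub
      hF).mul_const _
  · rw [tendsto_pi_nhds]
    exact key

theorem IFaux.abs_deriv_le_of_lip {f : ℝ → ℝ} {c d t : ℝ}
    (hlip : ∀ s u, |f u - f s| ≤ c * |u - s|) (hd : HasDerivAt f d t) : |d| ≤ c := by
  have h1 := hasDerivAt_iff_tendsto_slope.1 hd
  have h2 : Tendsto (fun b => |slope f t b|) (𝓝[≠] t) (𝓝 |d|) := h1.abs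
  refine le_of_tendsto h2 ?_
  filter_upwards [self_mem_nhdsWithin] with b hb
  have hbt : b - t ≠ 0 := sub_ne_zero.2 hb
  rw [slope_def_field, abs_div]
  rw [div_le_iff₀ (abs_pos.2 hbt)]
  exact hlip t b

theorem IFaux.monotone_of_convexOn {f f' : ℝ → ℝ} (hconv : ConvexOn ℝ Set.univ f)
    (hd : ∀ t, HasDerivAt f (f' t) t) : Monotone f' := by
  intro s t hst
  rcases eq_or_lt_of_le hst with rfl | h
  · exact le_refl _
  · calc f' s ≤ slope f s t := hconv.le_slope_of_hasDerivAt trivial trivial h (hd s)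
    _ ≤ f' t := hconv.slope_le_of_hasDerivAt trivial trivial h (hd t)

theorem IFaux.deriv_nonneg_of_monotone {g : ℝ → ℝ} {d t : ℝ} (hm : Monotone g)
    (hd : HasDerivAt g d t) : 0 ≤ d := by
  have h1 := hasDerivAt_iff_tendsto_slope.1 hd
  have h2 : Tendsto (slope g t) (𝓝[>] t) (𝓝 d) :=
    h1.mono_left (nhdsWithin_mono t fun x hx => ne_of_gt hx)
  refine ge_of_tendsto h2 ?_
  filter_upwards [self_mem_nhdsWithin] with b hb
  rw [slope_def_field]
  have : 0 < b - t := sub_pos.2 hb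
  exact div_nonneg (sub_nonneg.2 (hm (le_of_lt hb))) this.le

theorem IFaux.lip_of_deriv_bound {f f' : ℝ → ℝ} {c : ℝ} (hd : ∀ t, HasDerivAt f (f' t) t)
    (hb : ∀ t, |f' t| ≤ c) (s t : ℝ) : |f t - f s| ≤ c * |t - s| := by
  have := Convex.norm_image_sub_le_of_norm_hasDerivWithin_le (𝕜 := ℝ) (f := f) (f' := f')
    (s := Set.univ) (C := c) (x := s) (y := t) (fun x _ => (hd x).hasDerivWithinAt)
    (fun x _ => hb x) convex_univ trivial trivial
  simpa [Real.norm_eq_abs] using this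

theorem IFaux.integral_contam_prod
    {Z H : Type*} [MeasurableSpace Z] [MeasurableSingletonClass Z]
    [NormedAddCommGroup H] [NormedSpace ℝ H] [CompleteSpace H]
    (P : Measure Z) [IsProbabilityMeasure P] (z₀ : Z) (ε : ℝ) (hε0 : 0 ≤ ε) (hε1 : ε ≤ 1)
    (F : Z × Z → H) (hFsm : StronglyMeasurable F) (C : ℝ) (hFb : ∀ z, ‖F z‖ ≤ C) :
    (∫ z, F z ∂((ENNReal.ofReal (1-ε) • P + ENNReal.ofReal ε • Measure.dirac z₀).prod
      (ENNReal.ofReal (1-ε) • P + ENNReal.ofReal ε • Measure.dirac z₀)))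
      = ((1-ε)^2) • (∫ z, F z ∂(P.prod P))
        + (ε*(1-ε)) • (∫ z₁, F (z₁, z₀) ∂P)
        + (ε*(1-ε)) • (∫ z₂, F (z₀, z₂) ∂P)
        + (ε^2) • F (z₀, z₀) := by
  set a := ENNReal.ofReal (1-ε) with ha
  set b := ENNReal.ofReal ε with hb
  have haT : a ≠ ⊤ := ENNReal.ofReal_ne_top
  have hbT : b ≠ ⊤ := ENNReal.ofReal_ne_top
  set δ := Measure.dirac z₀ with hδ
  have hexpand : (a • P + b • δ).prod (a • P + b • δ)
      = a • (a • P.prod P + b • P.prod δ) + b • (a • δ.prod P + b • δ.prod δ) := by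
    rw [Measure.add_prod, IFaux.smul_prod, IFaux.smul_prod, Measure.prod_add, Measure.prod_add,
      IFaux.prod_smul _ _ _ haT, IFaux.prod_smul _ _ _ hbT, IFaux.prod_smul _ _ _ haT,
      IFaux.prod_smul _ _ _ hbT, smul_add, smul_add]
  rw [hexpand]
  have hi1 : Integrable F (P.prod P) := IFaux.integrable_bdd hFsm.aestronglyMeasurable hFb
  have hi2 : Integrable F (P.prod δ) := IFaux.integrable_bdd hFsm.aestronglyMeasurable hFb
  have hi3 : Integrable F (δ.prod P) := IFaux.integrable_bdd hFsm.aestronglyMeasurable hFb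
  have hi4 : Integrable F (δ.prod δ) := IFaux.integrable_bdd hFsm.aestronglyMeasurable hFb
  have hI1 : Integrable F (a • (a • P.prod P + b • P.prod δ)) :=
    ((hi1.smul_measure haT).add_measure (hi2.smul_measure hbT)).smul_measure haT
  have hI2 : Integrable F (b • (a • δ.prod P + b • δ.prod δ)) :=
    ((hi3.smul_measure haT).add_measure (hi4.smul_measure hbT)).smul_measure hbT
  rw [integral_add_measure hI1 hI2, integral_smul_measure, integral_smul_measure,
    integral_add_measure ((hi1.smul_measure haT)) ((hi2.smul_measure hbT)),
    integral_add_measure ((hi3.smul_measure haT)) ((hi4.smul_measure hbT)),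
    integral_smul_measure, integral_smul_measure, integral_smul_measure, integral_smul_measure]
  have hma : Measurable (fun x : Z => (x, z₀)) := measurable_id.prodMk measurable_const
  have hmb : Measurable (fun x : Z => (z₀, x)) := measurable_const.prodMk measurable_id
  have e2 : (∫ z, F z ∂(P.prod δ)) = ∫ z₁, F (z₁, z₀) ∂P := by
    rw [hδ, Measure.prod_dirac]
    exact integral_map hma.aemeasurable hFsm.aestronglyMeasurable
  have e3 : (∫ z, F z ∂(δ.prod P)) = ∫ z₂, F (z₀, z₂) ∂P := by
    rw [hδ, Measure.dirac_prod]
    exact integral_map hmb.aemeasurable hFsm.aestronglyMeasurable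
  have e4 : (∫ z, F z ∂(δ.prod δ)) = F (z₀, z₀) := by
    rw [hδ, Measure.prod_dirac, Measure.map_dirac' hma, integral_dirac]
  rw [e2, e3, e4, ha, hb, ENNReal.toReal_ofReal hε0, ENNReal.toReal_ofReal (by linarith)]
  rw [smul_add, smul_add, smul_smul, smul_smul, smul_smul, smul_smul]
  have c1 : (1-ε) * (1-ε) = (1-ε)^2 := by ring
  have c2 : (1-ε) * ε = ε * (1-ε) := by ring
  have c3 : ε * ε = ε^2 := by ring
  rw [c1, c2, c3]
  abel

theorem IFaux.first_order_condition
    {X : Type*} [MetricSpace X] [TopologicalSpace.SeparableSpace X]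
    [MeasurableSpace X] [BorelSpace X]
    {H : Type*} [NormedAddCommGroup H] [InnerProductSpace ℝ H] [CompleteSpace H]
    [TopologicalSpace.SeparableSpace H]
    (Y : Set ℝ)
    (L D₅L : X → Y → X → Y → ℝ → ℝ)
    (hL_meas : Measurable fun p : (X × Y) × (X × Y) × ℝ => L p.1.1 p.1.2 p.2.1.1 p.2.1.2 p.2.2)
    (hD5meas : Measurable fun p : ((X × Y) × (X × Y)) × ℝ =>
      D₅L p.1.1.1 p.1.1.2 p.1.2.1 p.1.2.2 p.2)
    (c : ℝ) (hc : 0 ≤ c)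
    (hL_lip : ∀ x y x' y' s t, |L x y x' y' t - L x y x' y' s| ≤ c * |t - s|)
    (hD1 : ∀ x y x' y' t, HasDerivAt (L x y x' y') (D₅L x y x' y' t) t)
    (hD1b : ∀ x y x' y' t, |D₅L x y x' y' t| ≤ c)
    (Φ : X × X → H) (hΦcont : Continuous Φ)
    (kb : ℝ) (hkb : ∀ p, ‖Φ p‖ ≤ kb)
    (Q : Measure (X × Y)) [IsProbabilityMeasure Q]
    (lam : ℝ) (f₀ : H) (hmin : ∀ g, regRisk L Φ Q lam f₀ ≤ regRisk L Φ Q lam g) :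
    (2 * lam) • f₀ + ∫ z : (X × Y) × (X × Y),
      (D₅L z.1.1 z.1.2 z.2.1 z.2.2 (fhat Φ f₀ (z.1.1, z.2.1))) • Φ (z.1.1, z.2.1)
      ∂(Q.prod Q) = 0 := by
  haveI : SecondCountableTopology X := UniformSpace.secondCountable_of_separable X
  haveI : SecondCountableTopology H := UniformSpace.secondCountable_of_separable H
  set μ := Q.prod Q with hμ
  have mπ : Measurable (fun z : (X × Y) × (X × Y) => (z.1.1, z.2.1)) :=
    (measurable_fst.comp measurable_fst).prodMk (measurable_fst.comp measurable_snd)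
  set φ : (X × Y) × (X × Y) → H := fun z => Φ (z.1.1, z.2.1) with hφ
  have smφ : StronglyMeasurable φ := hΦcont.stronglyMeasurable.comp_measurable mπ
  have ma : ∀ f : H, Measurable (fun z : (X × Y) × (X × Y) => ⟪f, φ z⟫) := fun f =>
    ((continuous_const.inner hΦcont).measurable).comp mπ
  have mabnd : ∀ (f : H) z, |⟪f, φ z⟫| ≤ ‖f‖ * kb := by
    intro f z
    calc |⟪f, φ z⟫| ≤ ‖f‖ * ‖φ z‖ := abs_real_inner_le_norm f (φ z)
    _ ≤ ‖f‖ * kb := by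
        have := hkb (z.1.1, z.2.1)
        exact mul_le_mul_of_nonneg_left this (norm_nonneg f)
  have mL2 : Measurable (fun p : ((X × Y) × (X × Y)) × ℝ =>
      L p.1.1.1 p.1.1.2 p.1.2.1 p.1.2.2 p.2) := by
    have : Measurable (fun p : ((X × Y) × (X × Y)) × ℝ => (p.1.1, (p.1.2, p.2))) :=
      (measurable_fst.comp measurable_fst).prodMk
        ((measurable_snd.comp measurable_fst).prodMk measurable_snd)
    exact hL_meas.comp this
  set G : (X × Y) × (X × Y) → H := fun z =>
    (D₅L z.1.1 z.1.2 z.2.1 z.2.2 (⟪f₀, φ z⟫)) • φ z with hG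
  have mD : Measurable (fun z : (X × Y) × (X × Y) =>
      D₅L z.1.1 z.1.2 z.2.1 z.2.2 (⟪f₀, φ z⟫)) :=
    hD5meas.comp (measurable_id.prodMk (ma f₀))
  have smG : StronglyMeasurable G := mD.stronglyMeasurable.smul smφ
  have hGbnd : ∀ z, ‖G z‖ ≤ c * kb := by
    intro z
    rw [hG]
    simp only [norm_smul, Real.norm_eq_abs]
    have h1 := hD1b z.1.1 z.1.2 z.2.1 z.2.2 (⟪f₀, φ z⟫)
    have h2 := hkb (z.1.1, z.2.1)
    exact mul_le_mul h1 h2 (norm_nonneg _) hc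
  have hGint : Integrable G μ := IFaux.integrable_bdd smG.aestronglyMeasurable hGbnd
  have key : ∀ g : H, ⟪(2 * lam) • f₀ + ∫ z, G z ∂μ, g⟫ = 0 := by
    intro g
    set F : ℝ → (X × Y) × (X × Y) → ℝ := fun t z =>
      L z.1.1 z.1.2 z.2.1 z.2.2 (⟪f₀, φ z⟫ + t * ⟪g, φ z⟫) - L z.1.1 z.1.2 z.2.1 z.2.2 0
      with hF
    set F' : ℝ → (X × Y) × (X × Y) → ℝ := fun t z =>
      D₅L z.1.1 z.1.2 z.2.1 z.2.2 (⟪f₀, φ z⟫ + t * ⟪g, φ z⟫) * ⟪g, φ z⟫ with hF'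
    have hFmeas : ∀ t : ℝ, AEStronglyMeasurable (F t) μ := by
      intro t
      refine Measurable.aestronglyMeasurable ?_
      exact (mL2.comp (measurable_id.prodMk ((ma f₀).add ((ma g).const_mul t)))).sub
        (mL2.comp (measurable_id.prodMk measurable_const))
    have hF'meas : ∀ t : ℝ, AEStronglyMeasurable (F' t) μ := by
      intro t
      refine Measurable.aestronglyMeasurable ?_
      exact (hD5meas.comp (measurable_id.prodMk ((ma f₀).add ((ma g).const_mul t)))).mul (ma g)
    have hFint : Integrable (F 0) μ := by
      refine IFaux.integrable_bdd (hFmeas 0) (C := c * (‖f₀‖ * kb)) ?_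
      intro z
      rw [hF]
      simp only [Real.norm_eq_abs, zero_mul, add_zero]
      calc |L z.1.1 z.1.2 z.2.1 z.2.2 (⟪f₀, φ z⟫) - L z.1.1 z.1.2 z.2.1 z.2.2 0|
          ≤ c * |⟪f₀, φ z⟫ - 0| := hL_lip _ _ _ _ 0 _
        _ ≤ c * (‖f₀‖ * kb) := by
            rw [sub_zero]
            exact mul_le_mul_of_nonneg_left (mabnd f₀ z) hc
    have hbound : ∀ᵐ z ∂μ, ∀ t ∈ Metric.ball (0:ℝ) 1, ‖F' t z‖ ≤ c * (‖g‖ * kb) := by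
      refine ae_of_all _ fun z t _ => ?_
      rw [hF']
      simp only [Real.norm_eq_abs, abs_mul]
      have h1 := hD1b z.1.1 z.1.2 z.2.1 z.2.2 (⟪f₀, φ z⟫ + t * ⟪g, φ z⟫)
      exact mul_le_mul h1 (mabnd g z) (abs_nonneg _) hc
    have hdiff : ∀ᵐ z ∂μ, ∀ t ∈ Metric.ball (0:ℝ) 1,
        HasDerivAt (fun t => F t z) (F' t z) t := by
      refine ae_of_all _ fun z t _ => ?_
      have haff : HasDerivAt (fun t : ℝ => ⟪f₀, φ z⟫ + t * ⟪g, φ z⟫) (⟪g, φ z⟫) t := by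
        simpa using ((hasDerivAt_id t).mul_const (⟪g, φ z⟫)).const_add (⟪f₀, φ z⟫)
      exact ((hD1 z.1.1 z.1.2 z.2.1 z.2.2 _).comp t haff).sub_const _
    have hderiv := hasDerivAt_integral_of_dominated_loc_of_deriv_le (Metric.ball_mem_nhds 0 one_pos)
      (Eventually.of_forall fun t => hFmeas t) hFint (hF'meas 0) hbound
      (integrable_const _) hdiff
    have hquad : HasDerivAt (fun t : ℝ => lam * ‖f₀ + t • g‖ ^ 2) (2 * lam * ⟪f₀, g⟫) 0 := by
      have hexp : (fun t : ℝ => lam * ‖f₀ + t • g‖ ^ 2) =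
          (fun t : ℝ => lam * ‖f₀‖ ^ 2 + (2 * lam * ⟪f₀, g⟫) * t + (lam * ‖g‖ ^ 2) * t ^ 2) := by
        funext t
        have h1 : ‖f₀ + t • g‖ ^ 2 = ‖f₀‖ ^ 2 + 2 * ⟪f₀, t • g⟫ + ‖t • g‖ ^ 2 :=
          norm_add_sq_real f₀ (t • g)
        rw [h1, real_inner_smul_right, norm_smul]
        simp only [Real.norm_eq_abs]
        rw [mul_pow, sq_abs]
        ring
      rw [hexp]
      have h2 : HasDerivAt (fun t : ℝ => lam * ‖f₀‖ ^ 2 + (2 * lam * ⟪f₀, g⟫) * t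
          + (lam * ‖g‖ ^ 2) * t ^ 2)
          (2 * lam * ⟪f₀, g⟫ + (lam * ‖g‖ ^ 2) * (2 * 0 ^ 1)) 0 := by
        exact ((((hasDerivAt_id (0:ℝ)).const_mul (2 * lam * ⟪f₀, g⟫)).const_add
          (lam * ‖f₀‖ ^ 2)).add ((hasDerivAt_pow 2 (0:ℝ)).const_mul (lam * ‖g‖ ^ 2))).congr_deriv
          (by ring)
      simpa using h2
    have hψeq : ∀ t : ℝ, regRisk L Φ Q lam (f₀ + t • g)
        = (∫ z, F t z ∂μ) + lam * ‖f₀ + t • g‖ ^ 2 := by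
      intro t
      unfold regRisk shiftedRisk
      congr 1
      · apply integral_congr_ae
        refine ae_of_all _ fun z => ?_
        rw [hF]
        simp only [fhat, inner_add_left, real_inner_smul_left, hφ]
    have hψ : HasDerivAt (fun t : ℝ => regRisk L Φ Q lam (f₀ + t • g))
        ((∫ z, F' 0 z ∂μ) + 2 * lam * ⟪f₀, g⟫) 0 := by
      have := (hderiv.2.add hquad)
      apply this.congr_of_eventuallyEq
      filter_upwards with t
      rw [hψeq t, Pi.add_apply]
    have hlocmin : IsLocalMin (fun t : ℝ => regRisk L Φ Q lam (f₀ + t • g)) 0 := by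
      refine Eventually.of_forall fun t => ?_
      simpa using hmin (f₀ + t • g)
    have hzero : (∫ z, F' 0 z ∂μ) + 2 * lam * ⟪f₀, g⟫ = 0 :=
      hlocmin.hasDerivAt_eq_zero hψ
    have hinner : ⟪∫ z, G z ∂μ, g⟫ = ∫ z, F' 0 z ∂μ := by
      rw [real_inner_comm, ← integral_inner hGint g]
      apply integral_congr_ae
      refine ae_of_all _ fun z => ?_
      simp only [hG, hF', real_inner_smul_right, zero_mul, add_zero]
    rw [inner_add_left, real_inner_smul_left, hinner]
    linarith [hzero]
  have := key ((2 * lam) • f₀ + ∫ z, G z ∂μ)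
  rwa [inner_self_eq_zero] at this

end AuxIF

set_option maxHeartbeats 3200000 in
theorem IFaux.main
    {X : Type*} [MetricSpace X] [CompleteSpace X] [TopologicalSpace.SeparableSpace X]
    [MeasurableSpace X] [BorelSpace X]
    {H : Type*} [NormedAddCommGroup H] [InnerProductSpace ℝ H] [CompleteSpace H]
    [TopologicalSpace.SeparableSpace H]
    (Y : Set ℝ) (hYclosed : IsClosed Y)
    (L D₅L D₅D₅L : X → Y → X → Y → ℝ → ℝ)
    (hL_meas : Measurable fun p : (X × Y) × (X × Y) × ℝ => L p.1.1 p.1.2 p.2.1.1 p.2.1.2 p.2.2)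
    (hL_nonneg : ∀ x y x' y' t, 0 ≤ L x y x' y' t)
    (hL_convex : ∀ x y x' y', ConvexOn ℝ Set.univ (L x y x' y'))
    (c : ℝ) (hc : 0 ≤ c)
    (hL_lip : ∀ x y x' y' s t, |L x y x' y' t - L x y x' y' s| ≤ c * |t - s|)
    (hD1 : ∀ x y x' y' t, HasDerivAt (L x y x' y') (D₅L x y x' y' t) t)
    (hD2 : ∀ x y x' y' t, HasDerivAt (D₅L x y x' y') (D₅D₅L x y x' y' t) t)
    (hD1cont : ∀ x y x' y', Continuous (D₅L x y x' y'))
    (hD2cont : ∀ x y x' y', Continuous (D₅D₅L x y x' y'))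
    (cL1 : ℝ) (hcL1 : 0 < cL1) (hD1bdd : ∀ x y x' y' t, |D₅L x y x' y' t| ≤ cL1)
    (cL2 : ℝ) (hcL2 : 0 < cL2) (hD2bdd : ∀ x y x' y' t, |D₅D₅L x y x' y' t| ≤ cL2)
    (Φ : X × X → H) (hΦcont : Continuous Φ)
    (kb : ℝ) (hkb : ∀ p : X × X, ‖Φ p‖ ≤ kb)
    (P : Measure (X × Y)) [IsProbabilityMeasure P]
    (lam : ℝ) (hlam : 0 < lam)
    (x₀ : X) (y₀ : Y)
    (fP : H) (hfP : ∀ g : H, regRisk L Φ P lam fP ≤ regRisk L Φ P lam g)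
    (fε : ℝ → H)
    (hfε : ∀ ε : ℝ, 0 ≤ ε → ε < 1 → ∀ g : H,
      regRisk L Φ
          (ENNReal.ofReal (1 - ε) • P + ENNReal.ofReal ε • Measure.dirac ((x₀, y₀) : X × Y))
          lam (fε ε)
        ≤ regRisk L Φ
            (ENNReal.ofReal (1 - ε) • P + ENNReal.ofReal ε • Measure.dirac ((x₀, y₀) : X × Y))
            lam g) :
    ∃ v : H,
      Tendsto (fun ε : ℝ => ε⁻¹ • (fε ε - fP)) (nhdsWithin 0 (Set.Ioi 0)) (𝓝 v) ∧
      (2 * lam) • v +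
          (∫ z : (X × Y) × (X × Y),
            (D₅D₅L z.1.1 z.1.2 z.2.1 z.2.2 (fhat Φ fP (z.1.1, z.2.1))
              * (@inner ℝ H _ (Φ (z.1.1, z.2.1)) v)) • Φ (z.1.1, z.2.1) ∂(P.prod P))
        = -(((-2 : ℝ)) • (∫ z : (X × Y) × (X × Y),
              (D₅L z.1.1 z.1.2 z.2.1 z.2.2 (fhat Φ fP (z.1.1, z.2.1))) • Φ (z.1.1, z.2.1)
              ∂(P.prod P))
            + (∫ z : (X × Y) × (X × Y),
              ((D₅L z.1.1 z.1.2 x₀ y₀ (fhat Φ fP (z.1.1, x₀))) • Φ (z.1.1, x₀)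
                + (D₅L x₀ y₀ z.2.1 z.2.2 (fhat Φ fP (x₀, z.2.1))) • Φ (x₀, z.2.1))
              ∂(P.prod P))) ∧
      ‖v‖ ≤ (8 / lam) * kb * c := by
  classical
  haveI : SecondCountableTopology X := UniformSpace.secondCountable_of_separable X
  haveI : SecondCountableTopology H := UniformSpace.secondCountable_of_separable H
  have hkb0 : 0 ≤ kb := (norm_nonneg _).trans (hkb (x₀, x₀))
  have hckb : 0 ≤ c * kb := mul_nonneg hc hkb0
  -- derived pointwise facts about the loss
  have hD1c : ∀ x y x' y' t, |D₅L x y x' y' t| ≤ c := fun x y x' y' t =>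
    IFaux.abs_deriv_le_of_lip (hL_lip x y x' y') (hD1 x y x' y' t)
  have hmono : ∀ x y x' y', Monotone (D₅L x y x' y') := fun x y x' y' =>
    IFaux.monotone_of_convexOn (hL_convex x y x' y') (hD1 x y x' y')
  have hD2pos : ∀ x y x' y' t, 0 ≤ D₅D₅L x y x' y' t := fun x y x' y' t =>
    IFaux.deriv_nonneg_of_monotone (hmono x y x' y') (hD2 x y x' y' t)
  have hlipD : ∀ x y x' y' s t, |D₅L x y x' y' t - D₅L x y x' y' s| ≤ cL2 * |t - s| :=
    fun x y x' y' s t =>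
      IFaux.lip_of_deriv_bound (hD2 x y x' y') (fun u => hD2bdd x y x' y' u) s t
  -- measurability
  have mL2 : Measurable (fun p : ((X × Y) × (X × Y)) × ℝ =>
      L p.1.1.1 p.1.1.2 p.1.2.1 p.1.2.2 p.2) := by
    have : Measurable (fun p : ((X × Y) × (X × Y)) × ℝ => (p.1.1, (p.1.2, p.2))) :=
      (measurable_fst.comp measurable_fst).prodMk
        ((measurable_snd.comp measurable_fst).prodMk measurable_snd)
    exact hL_meas.comp this
  have mD5 : Measurable (fun p : ((X × Y) × (X × Y)) × ℝ =>
      D₅L p.1.1.1 p.1.1.2 p.1.2.1 p.1.2.2 p.2) :=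
    IFaux.measurable_deriv (fun z : (X × Y) × (X × Y) => L z.1.1 z.1.2 z.2.1 z.2.2)
      (fun z : (X × Y) × (X × Y) => D₅L z.1.1 z.1.2 z.2.1 z.2.2) mL2
      (fun (z : (X × Y) × (X × Y)) t => hD1 z.1.1 z.1.2 z.2.1 z.2.2 t)
  have mD55 : Measurable (fun p : ((X × Y) × (X × Y)) × ℝ =>
      D₅D₅L p.1.1.1 p.1.1.2 p.1.2.1 p.1.2.2 p.2) :=
    IFaux.measurable_deriv (fun z : (X × Y) × (X × Y) => D₅L z.1.1 z.1.2 z.2.1 z.2.2)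
      (fun z : (X × Y) × (X × Y) => D₅D₅L z.1.1 z.1.2 z.2.1 z.2.2) mD5
      (fun (z : (X × Y) × (X × Y)) t => hD2 z.1.1 z.1.2 z.2.1 z.2.2 t)
  have mπ : Measurable (fun z : (X × Y) × (X × Y) => (z.1.1, z.2.1)) :=
    (measurable_fst.comp measurable_fst).prodMk (measurable_fst.comp measurable_snd)
  have smφ : StronglyMeasurable (fun z : (X × Y) × (X × Y) => Φ (z.1.1, z.2.1)) :=
    hΦcont.stronglyMeasurable.comp_measurable mπ
  have ma : ∀ f : H, Measurable (fun z : (X × Y) × (X × Y) => fhat Φ f (z.1.1, z.2.1)) :=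
    fun f => ((continuous_const.inner hΦcont).measurable).comp mπ
  have hfb : ∀ (f : H) (p : X × X), |fhat Φ f p| ≤ ‖f‖ * kb := by
    intro f p
    calc |fhat Φ f p| ≤ ‖f‖ * ‖Φ p‖ := abs_real_inner_le_norm f (Φ p)
    _ ≤ ‖f‖ * kb := mul_le_mul_of_nonneg_left (hkb p) (norm_nonneg f)
  have hfsub : ∀ (f g : H) (p : X × X), fhat Φ f p - fhat Φ g p = fhat Φ (f - g) p := by
    intro f g p
    simp [fhat, inner_sub_left]
  -- the gradient integrand
  set Gf : H → ((X × Y) × (X × Y)) → H := fun f z =>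
    (D₅L z.1.1 z.1.2 z.2.1 z.2.2 (fhat Φ f (z.1.1, z.2.1))) • Φ (z.1.1, z.2.1) with hGfdef
  have smGf : ∀ f, StronglyMeasurable (Gf f) := fun f =>
    ((mD5.comp (measurable_id.prodMk (ma f))).stronglyMeasurable).smul smφ
  have hGfb : ∀ f z, ‖Gf f z‖ ≤ c * kb := by
    intro f z
    rw [hGfdef]
    simp only [norm_smul, Real.norm_eq_abs]
    exact mul_le_mul (hD1c _ _ _ _ _) (hkb _) (norm_nonneg _) hc
  have hGf_diff : ∀ f g z, ‖Gf f z - Gf g z‖ ≤ cL2 * kb * kb * ‖f - g‖ := by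
    intro f g z
    rw [hGfdef]
    simp only
    rw [← sub_smul, norm_smul, Real.norm_eq_abs]
    calc |D₅L z.1.1 z.1.2 z.2.1 z.2.2 (fhat Φ f (z.1.1, z.2.1))
          - D₅L z.1.1 z.1.2 z.2.1 z.2.2 (fhat Φ g (z.1.1, z.2.1))| * ‖Φ (z.1.1, z.2.1)‖
        ≤ (cL2 * |fhat Φ f (z.1.1, z.2.1) - fhat Φ g (z.1.1, z.2.1)|) * kb := by
          exact mul_le_mul (hlipD _ _ _ _ _ _) (hkb _) (norm_nonneg _)
            (by positivity)
      _ ≤ (cL2 * (‖f - g‖ * kb)) * kb := by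
          have := hfb (f - g) (z.1.1, z.2.1)
          rw [hfsub f g]
          gcongr
      _ = cL2 * kb * kb * ‖f - g‖ := by ring
  -- the four gradient pieces
  set z₀ : X × Y := (x₀, y₀) with hz₀
  set A : H → H := fun f => ∫ z, Gf f z ∂(P.prod P) with hAdef
  set B1 : H → H := fun f => ∫ z₁, Gf f (z₁, z₀) ∂P with hB1def
  set B2 : H → H := fun f => ∫ z₂, Gf f (z₀, z₂) ∂P with hB2def
  set Cd : H → H := fun f => Gf f (z₀, z₀) with hCddef
  have smGf1 : ∀ f, StronglyMeasurable (fun z₁ : X × Y => Gf f (z₁, z₀)) := fun f =>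
    (smGf f).comp_measurable (measurable_id.prodMk measurable_const)
  have smGf2 : ∀ f, StronglyMeasurable (fun z₂ : X × Y => Gf f (z₀, z₂)) := fun f =>
    (smGf f).comp_measurable (measurable_const.prodMk measurable_id)
  have hAint : ∀ f, Integrable (Gf f) (P.prod P) := fun f =>
    IFaux.integrable_bdd (smGf f).aestronglyMeasurable (hGfb f)
  have hB1int : ∀ f, Integrable (fun z₁ : X × Y => Gf f (z₁, z₀)) P := fun f =>
    IFaux.integrable_bdd (smGf1 f).aestronglyMeasurable (fun z => hGfb f _)
  have hB2int : ∀ f, Integrable (fun z₂ : X × Y => Gf f (z₀, z₂)) P := fun f =>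
    IFaux.integrable_bdd (smGf2 f).aestronglyMeasurable (fun z => hGfb f _)
  have hAb : ∀ f, ‖A f‖ ≤ c * kb := by
    intro f
    rw [hAdef]
    have := norm_integral_le_of_norm_le_const (μ := P.prod P)
      (ae_of_all _ (hGfb f))
    simpa [measure_univ] using this
  have hB1b : ∀ f, ‖B1 f‖ ≤ c * kb := by
    intro f
    rw [hB1def]
    have := norm_integral_le_of_norm_le_const (μ := P)
      (ae_of_all _ (fun z₁ : X × Y => hGfb f (z₁, z₀)))
    simpa [measure_univ] using this
  have hB2b : ∀ f, ‖B2 f‖ ≤ c * kb := by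
    intro f
    rw [hB2def]
    have := norm_integral_le_of_norm_le_const (μ := P)
      (ae_of_all _ (fun z₂ : X × Y => hGfb f (z₀, z₂)))
    simpa [measure_univ] using this
  have hCdb : ∀ f, ‖Cd f‖ ≤ c * kb := fun f => hGfb f _
  have hAdiff : ∀ f g, ‖A f - A g‖ ≤ cL2 * kb * kb * ‖f - g‖ := by
    intro f g
    rw [hAdef]
    simp only
    rw [← integral_sub (hAint f) (hAint g)]
    have := norm_integral_le_of_norm_le_const (μ := P.prod P)
      (ae_of_all _ (fun z => hGf_diff f g z))
    simpa [measure_univ] using this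
  have hB1diff : ∀ f g, ‖B1 f - B1 g‖ ≤ cL2 * kb * kb * ‖f - g‖ := by
    intro f g
    rw [hB1def]
    simp only
    rw [← integral_sub (hB1int f) (hB1int g)]
    have := norm_integral_le_of_norm_le_const (μ := P)
      (ae_of_all _ (fun z₁ : X × Y => hGf_diff f g (z₁, z₀)))
    simpa [measure_univ] using this
  have hB2diff : ∀ f g, ‖B2 f - B2 g‖ ≤ cL2 * kb * kb * ‖f - g‖ := by
    intro f g
    rw [hB2def]
    simp only
    rw [← integral_sub (hB2int f) (hB2int g)]
    have := norm_integral_le_of_norm_le_const (μ := P)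
      (ae_of_all _ (fun z₂ : X × Y => hGf_diff f g (z₀, z₂)))
    simpa [measure_univ] using this
  -- first-order conditions
  have E0 : (2 * lam) • fP + A fP = 0 := by
    rw [hAdef]
    exact IFaux.first_order_condition Y L D₅L hL_meas mD5 c hc hL_lip hD1 hD1c Φ hΦcont
      kb hkb P lam fP hfP
  have hPprob : ∀ ε : ℝ, 0 ≤ ε → ε < 1 → IsProbabilityMeasure
      (ENNReal.ofReal (1 - ε) • P + ENNReal.ofReal ε • Measure.dirac z₀) := by
    intro ε h0 h1
    constructor
    rw [Measure.add_apply, Measure.smul_apply, Measure.smul_apply, measure_univ, measure_univ,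
      smul_eq_mul, smul_eq_mul, mul_one, mul_one, ← ENNReal.ofReal_add (by linarith) h0]
    norm_num
  have Eε : ∀ ε : ℝ, 0 < ε → ε < 1 →
      (2 * lam) • (fε ε) + (((1 - ε) ^ 2) • A (fε ε) + (ε * (1 - ε)) • B1 (fε ε)
        + (ε * (1 - ε)) • B2 (fε ε) + (ε ^ 2) • Cd (fε ε)) = 0 := by
    intro ε h0 h1
    haveI := hPprob ε h0.le h1
    have hfoc := IFaux.first_order_condition Y L D₅L hL_meas mD5 c hc hL_lip hD1 hD1c Φ hΦcont
      kb hkb (ENNReal.ofReal (1 - ε) • P + ENNReal.ofReal ε • Measure.dirac z₀)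
      lam (fε ε) (hfε ε h0.le h1)
    have hexp := IFaux.integral_contam_prod P z₀ ε h0.le h1.le (Gf (fε ε)) (smGf (fε ε))
      (c * kb) (hGfb (fε ε))
    rw [hAdef, hB1def, hB2def, hCddef]
    simp only
    rw [← hexp]
    exact hfoc
  -- monotonicity of the gradient
  have hAmono : ∀ f g, 0 ≤ (inner ℝ (A f - A g) (f - g) : ℝ) := by
    intro f g
    rw [hAdef]
    simp only
    have hsub : Integrable (fun a => Gf f a - Gf g a) (P.prod P) := (hAint f).sub (hAint g)
    rw [← integral_sub (hAint f) (hAint g), real_inner_comm,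
      ← integral_inner hsub (f - g)]
    refine integral_nonneg fun z => ?_
    simp only [hGfdef, inner_sub_right, real_inner_smul_right, Pi.zero_apply]
    have hss : (inner ℝ (f - g) (Φ (z.1.1, z.2.1)) : ℝ) = fhat Φ (f - g) (z.1.1, z.2.1) := rfl
    have hs : fhat Φ f (z.1.1, z.2.1) = fhat Φ g (z.1.1, z.2.1)
        + fhat Φ (f - g) (z.1.1, z.2.1) := by
      rw [← hfsub f g]; ring
    rw [hss, hs]
    rcases le_total 0 (fhat Φ (f - g) (z.1.1, z.2.1)) with hsgn | hsgn
    · have hmle := hmono z.1.1 z.1.2 z.2.1 z.2.2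
        (le_add_of_nonneg_right hsgn (a := fhat Φ g (z.1.1, z.2.1)))
      nlinarith [mul_le_mul_of_nonneg_right hmle hsgn]
    · have hmle := hmono z.1.1 z.1.2 z.2.1 z.2.2
        (add_le_of_nonpos_right hsgn (a := fhat Φ g (z.1.1, z.2.1)))
      nlinarith [mul_le_mul_of_nonpos_right hmle hsgn]
  -- the master identity from the two first-order conditions
  have hW : ∀ ε : ℝ, 0 < ε → ε < 1 →
      (2 * lam) • (fε ε - fP) + (A (fε ε) - A fP)
        = (ε * (2 - ε)) • A (fε ε) - (ε * (1 - ε)) • B1 (fε ε)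
          - (ε * (1 - ε)) • B2 (fε ε) - (ε ^ 2) • Cd (fε ε) := by
    intro ε h0 h1
    have h3 : (2 * lam) • (fε ε - fP) + (A (fε ε) - A fP)
        - ((ε * (2 - ε)) • A (fε ε) - (ε * (1 - ε)) • B1 (fε ε)
          - (ε * (1 - ε)) • B2 (fε ε) - (ε ^ 2) • Cd (fε ε))
        = ((2 * lam) • (fε ε) + (((1 - ε) ^ 2) • A (fε ε) + (ε * (1 - ε)) • B1 (fε ε)
          + (ε * (1 - ε)) • B2 (fε ε) + (ε ^ 2) • Cd (fε ε)))
          - ((2 * lam) • fP + A fP) := by module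
    rw [Eε ε h0 h1, E0, sub_zero] at h3
    exact sub_eq_zero.mp h3
  -- stability bound
  have hstab : ∀ ε : ℝ, 0 < ε → ε < 1 → ‖fε ε - fP‖ ≤ (5 * c * kb / (2 * lam)) * ε := by
    intro ε h0 h1
    have hWn : ‖(ε * (2 - ε)) • A (fε ε) - (ε * (1 - ε)) • B1 (fε ε)
        - (ε * (1 - ε)) • B2 (fε ε) - (ε ^ 2) • Cd (fε ε)‖ ≤ 5 * ε * (c * kb) := by
      have n1 : ‖(ε * (2 - ε)) • A (fε ε)‖ ≤ 2 * ε * (c * kb) := by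
        rw [norm_smul, Real.norm_eq_abs, abs_of_nonneg (by nlinarith)]
        have h := hAb (fε ε)
        have key := mul_le_mul_of_nonneg_left h (show (0:ℝ) ≤ ε * (2 - ε) by nlinarith)
        nlinarith [hckb, mul_nonneg (mul_nonneg h0.le h0.le) hckb]
      have n2 : ‖(ε * (1 - ε)) • B1 (fε ε)‖ ≤ ε * (c * kb) := by
        rw [norm_smul, Real.norm_eq_abs, abs_of_nonneg (by nlinarith)]
        have h := hB1b (fε ε)
        have key := mul_le_mul_of_nonneg_left h (show (0:ℝ) ≤ ε * (1 - ε) by nlinarith)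
        nlinarith [hckb, mul_nonneg (mul_nonneg h0.le h0.le) hckb]
      have n3 : ‖(ε * (1 - ε)) • B2 (fε ε)‖ ≤ ε * (c * kb) := by
        rw [norm_smul, Real.norm_eq_abs, abs_of_nonneg (by nlinarith)]
        have h := hB2b (fε ε)
        have key := mul_le_mul_of_nonneg_left h (show (0:ℝ) ≤ ε * (1 - ε) by nlinarith)
        nlinarith [hckb, mul_nonneg (mul_nonneg h0.le h0.le) hckb]
      have n4 : ‖(ε ^ 2) • Cd (fε ε)‖ ≤ ε * (c * kb) := by
        rw [norm_smul, Real.norm_eq_abs, abs_of_nonneg (by positivity)]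
        have h := hCdb (fε ε)
        have key := mul_le_mul_of_nonneg_left h (show (0:ℝ) ≤ ε ^ 2 by positivity)
        nlinarith [hckb, mul_nonneg (mul_nonneg h0.le (show (0:ℝ) ≤ 1 - ε by linarith)) hckb]
      calc ‖(ε * (2 - ε)) • A (fε ε) - (ε * (1 - ε)) • B1 (fε ε)
          - (ε * (1 - ε)) • B2 (fε ε) - (ε ^ 2) • Cd (fε ε)‖
          ≤ ‖(ε * (2 - ε)) • A (fε ε) - (ε * (1 - ε)) • B1 (fε ε)
            - (ε * (1 - ε)) • B2 (fε ε)‖ + ‖(ε ^ 2) • Cd (fε ε)‖ := norm_sub_le _ _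
        _ ≤ (‖(ε * (2 - ε)) • A (fε ε) - (ε * (1 - ε)) • B1 (fε ε)‖
            + ‖(ε * (1 - ε)) • B2 (fε ε)‖) + ‖(ε ^ 2) • Cd (fε ε)‖ := by
            gcongr
            exact norm_sub_le _ _
        _ ≤ ((‖(ε * (2 - ε)) • A (fε ε)‖ + ‖(ε * (1 - ε)) • B1 (fε ε)‖)
            + ‖(ε * (1 - ε)) • B2 (fε ε)‖) + ‖(ε ^ 2) • Cd (fε ε)‖ := by
            gcongr
            exact norm_sub_le _ _
        _ ≤ 5 * ε * (c * kb) := by linarith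
    have hineq : 2 * lam * ‖fε ε - fP‖ ^ 2 ≤ 5 * ε * (c * kb) * ‖fε ε - fP‖ := by
      have e1 : (inner ℝ ((2 * lam) • (fε ε - fP) + (A (fε ε) - A fP)) (fε ε - fP) : ℝ)
          = 2 * lam * ‖fε ε - fP‖ ^ 2 + inner ℝ (A (fε ε) - A fP) (fε ε - fP) := by
        rw [inner_add_left, real_inner_smul_left, real_inner_self_eq_norm_sq]
      have e3 : (inner ℝ ((2 * lam) • (fε ε - fP) + (A (fε ε) - A fP)) (fε ε - fP) : ℝ)
          ≤ 5 * ε * (c * kb) * ‖fε ε - fP‖ := by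
        rw [hW ε h0 h1]
        refine le_trans (real_inner_le_norm _ _) ?_
        exact mul_le_mul_of_nonneg_right hWn (norm_nonneg _)
      have e4 := hAmono (fε ε) fP
      rw [e1] at e3
      linarith
    rcases eq_or_lt_of_le (norm_nonneg (fε ε - fP)) with h | h
    · rw [← h]
      positivity
    · rw [div_mul_eq_mul_div, le_div_iff₀ (by positivity)]
      nlinarith
  -- the influence quotients
  set v : ℝ → H := fun ε => ε⁻¹ • (fε ε - fP) with hvdef
  have hC1 : (0:ℝ) ≤ 5 * c * kb / (2 * lam) := by positivity
  have hvb : ∀ ε : ℝ, 0 < ε → ε < 1 → ‖v ε‖ ≤ 5 * c * kb / (2 * lam) := by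
    intro ε h0 h1
    rw [hvdef]
    simp only
    rw [norm_smul, Real.norm_eq_abs, abs_of_pos (inv_pos.2 h0)]
    have h := hstab ε h0 h1
    calc ε⁻¹ * ‖fε ε - fP‖ ≤ ε⁻¹ * (5 * c * kb / (2 * lam) * ε) := by
          exact mul_le_mul_of_nonneg_left h (inv_pos.2 h0).le
      _ = 5 * c * kb / (2 * lam) := by field_simp
  -- the second-derivative operator
  set Bop : H → H := fun w => ∫ z, (D₅D₅L z.1.1 z.1.2 z.2.1 z.2.2 (fhat Φ fP (z.1.1, z.2.1))
    * (inner ℝ (Φ (z.1.1, z.2.1)) w : ℝ)) • Φ (z.1.1, z.2.1) ∂(P.prod P) with hBopdef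
  have maw : ∀ w : H, Measurable (fun z : (X × Y) × (X × Y) =>
      (inner ℝ (Φ (z.1.1, z.2.1)) w : ℝ)) := fun w =>
    ((hΦcont.inner continuous_const).measurable).comp mπ
  have hinnb : ∀ (w : H) (z : (X × Y) × (X × Y)),
      |(inner ℝ (Φ (z.1.1, z.2.1)) w : ℝ)| ≤ kb * ‖w‖ := by
    intro w z
    calc |(inner ℝ (Φ (z.1.1, z.2.1)) w : ℝ)| ≤ ‖Φ (z.1.1, z.2.1)‖ * ‖w‖ :=
        abs_real_inner_le_norm _ _
    _ ≤ kb * ‖w‖ := mul_le_mul_of_nonneg_right (hkb _) (norm_nonneg w)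
  have smB : ∀ w : H, StronglyMeasurable (fun z : (X × Y) × (X × Y) =>
      (D₅D₅L z.1.1 z.1.2 z.2.1 z.2.2 (fhat Φ fP (z.1.1, z.2.1))
        * (inner ℝ (Φ (z.1.1, z.2.1)) w : ℝ)) • Φ (z.1.1, z.2.1)) := fun w =>
    (((mD55.comp (measurable_id.prodMk (ma fP))).mul (maw w)).stronglyMeasurable).smul smφ
  have hBb : ∀ (w : H) (z : (X × Y) × (X × Y)),
      ‖(D₅D₅L z.1.1 z.1.2 z.2.1 z.2.2 (fhat Φ fP (z.1.1, z.2.1))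
        * (inner ℝ (Φ (z.1.1, z.2.1)) w : ℝ)) • Φ (z.1.1, z.2.1)‖ ≤ cL2 * (kb * ‖w‖) * kb := by
    intro w z
    rw [norm_smul, Real.norm_eq_abs, abs_mul]
    refine mul_le_mul (mul_le_mul (hD2bdd _ _ _ _ _) (hinnb w z) (abs_nonneg _) hcL2.le)
      (hkb _) (norm_nonneg _) (by positivity)
  have hBint : ∀ w : H, Integrable (fun z : (X × Y) × (X × Y) =>
      (D₅D₅L z.1.1 z.1.2 z.2.1 z.2.2 (fhat Φ fP (z.1.1, z.2.1))
        * (inner ℝ (Φ (z.1.1, z.2.1)) w : ℝ)) • Φ (z.1.1, z.2.1)) (P.prod P) := fun w =>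
    IFaux.integrable_bdd (smB w).aestronglyMeasurable (hBb w)
  have hBopb : ∀ w : H, ‖Bop w‖ ≤ cL2 * (kb * ‖w‖) * kb := by
    intro w
    rw [hBopdef]
    simp only
    have := norm_integral_le_of_norm_le_const (μ := P.prod P) (ae_of_all _ (hBb w))
    simpa [measure_univ] using this
  have hBsub : ∀ w₁ w₂ : H, Bop w₁ - Bop w₂ = Bop (w₁ - w₂) := by
    intro w₁ w₂
    rw [hBopdef]
    simp only
    rw [← integral_sub (hBint w₁) (hBint w₂)]
    refine integral_congr_ae (ae_of_all _ fun z => ?_)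
    simp only [inner_sub_right, mul_sub, sub_smul]
  have hlower : ∀ w : H, 2 * lam * ‖w‖ ≤ ‖(2 * lam) • w + Bop w‖ := by
    intro w
    have hpos : 0 ≤ (inner ℝ (Bop w) w : ℝ) := by
      rw [hBopdef]
      simp only
      rw [real_inner_comm, ← integral_inner (hBint w) w]
      refine integral_nonneg fun z => ?_
      rw [Pi.zero_apply, real_inner_smul_right]
      have h1 : (inner ℝ w (Φ (z.1.1, z.2.1)) : ℝ) = inner ℝ (Φ (z.1.1, z.2.1)) w :=
        real_inner_comm _ _
      rw [h1]
      have := hD2pos z.1.1 z.1.2 z.2.1 z.2.2 (fhat Φ fP (z.1.1, z.2.1))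
      nlinarith [sq_nonneg (inner ℝ (Φ (z.1.1, z.2.1)) w : ℝ)]
    have hinner : 2 * lam * ‖w‖ ^ 2 ≤ (inner ℝ ((2 * lam) • w + Bop w) w : ℝ) := by
      rw [inner_add_left, real_inner_smul_left, real_inner_self_eq_norm_sq]
      linarith
    have hub := real_inner_le_norm ((2 * lam) • w + Bop w) w
    rcases eq_or_lt_of_le (norm_nonneg w) with h | h
    · rw [← h]
      simp
    · nlinarith
  -- the remainder
  set Rr : ℝ → H := fun ε => ∫ z : (X × Y) × (X × Y),
    (ε⁻¹ * (D₅L z.1.1 z.1.2 z.2.1 z.2.2 (fhat Φ fP (z.1.1, z.2.1)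
          + ε * fhat Φ (v ε) (z.1.1, z.2.1))
        - D₅L z.1.1 z.1.2 z.2.1 z.2.2 (fhat Φ fP (z.1.1, z.2.1)))
      - D₅D₅L z.1.1 z.1.2 z.2.1 z.2.2 (fhat Φ fP (z.1.1, z.2.1))
        * fhat Φ (v ε) (z.1.1, z.2.1)) • Φ (z.1.1, z.2.1) ∂(P.prod P) with hRrdef
  have smR : ∀ ε : ℝ, StronglyMeasurable (fun z : (X × Y) × (X × Y) =>
      (ε⁻¹ * (D₅L z.1.1 z.1.2 z.2.1 z.2.2 (fhat Φ fP (z.1.1, z.2.1)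
            + ε * fhat Φ (v ε) (z.1.1, z.2.1))
          - D₅L z.1.1 z.1.2 z.2.1 z.2.2 (fhat Φ fP (z.1.1, z.2.1)))
        - D₅D₅L z.1.1 z.1.2 z.2.1 z.2.2 (fhat Φ fP (z.1.1, z.2.1))
          * fhat Φ (v ε) (z.1.1, z.2.1)) • Φ (z.1.1, z.2.1)) := by
    intro ε
    refine Measurable.stronglyMeasurable ?_ |>.smul smφ
    exact (((mD5.comp (measurable_id.prodMk ((ma fP).add ((ma (v ε)).const_mul ε)))).sub
      (mD5.comp (measurable_id.prodMk (ma fP)))).const_mul ε⁻¹).sub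
      ((mD55.comp (measurable_id.prodMk (ma fP))).mul (ma (v ε)))
  have hRb : ∀ ε : ℝ, 0 < ε → ∀ z : (X × Y) × (X × Y),
      ‖(ε⁻¹ * (D₅L z.1.1 z.1.2 z.2.1 z.2.2 (fhat Φ fP (z.1.1, z.2.1)
            + ε * fhat Φ (v ε) (z.1.1, z.2.1))
          - D₅L z.1.1 z.1.2 z.2.1 z.2.2 (fhat Φ fP (z.1.1, z.2.1)))
        - D₅D₅L z.1.1 z.1.2 z.2.1 z.2.2 (fhat Φ fP (z.1.1, z.2.1))
          * fhat Φ (v ε) (z.1.1, z.2.1)) • Φ (z.1.1, z.2.1)‖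
        ≤ 2 * cL2 * (‖v ε‖ * kb) * kb := by
    intro ε h0 z
    rw [norm_smul, Real.norm_eq_abs]
    have hV := hfb (v ε) (z.1.1, z.2.1)
    have habsV : 0 ≤ |fhat Φ (v ε) (z.1.1, z.2.1)| := abs_nonneg _
    have h1 : |ε⁻¹ * (D₅L z.1.1 z.1.2 z.2.1 z.2.2 (fhat Φ fP (z.1.1, z.2.1)
          + ε * fhat Φ (v ε) (z.1.1, z.2.1))
        - D₅L z.1.1 z.1.2 z.2.1 z.2.2 (fhat Φ fP (z.1.1, z.2.1)))|
        ≤ cL2 * (‖v ε‖ * kb) := by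
      rw [abs_mul, abs_of_pos (inv_pos.2 h0)]
      have hl := hlipD z.1.1 z.1.2 z.2.1 z.2.2 (fhat Φ fP (z.1.1, z.2.1))
        (fhat Φ fP (z.1.1, z.2.1) + ε * fhat Φ (v ε) (z.1.1, z.2.1))
      have he : fhat Φ fP (z.1.1, z.2.1) + ε * fhat Φ (v ε) (z.1.1, z.2.1)
          - fhat Φ fP (z.1.1, z.2.1) = ε * fhat Φ (v ε) (z.1.1, z.2.1) := by ring
      rw [he, abs_mul, abs_of_pos h0] at hl
      calc ε⁻¹ * |D₅L z.1.1 z.1.2 z.2.1 z.2.2 (fhat Φ fP (z.1.1, z.2.1)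
            + ε * fhat Φ (v ε) (z.1.1, z.2.1))
          - D₅L z.1.1 z.1.2 z.2.1 z.2.2 (fhat Φ fP (z.1.1, z.2.1))|
          ≤ ε⁻¹ * (cL2 * (ε * |fhat Φ (v ε) (z.1.1, z.2.1)|)) :=
            mul_le_mul_of_nonneg_left hl (inv_pos.2 h0).le
        _ = cL2 * |fhat Φ (v ε) (z.1.1, z.2.1)| := by field_simp
        _ ≤ cL2 * (‖v ε‖ * kb) := mul_le_mul_of_nonneg_left hV hcL2.le
    have h2 : |D₅D₅L z.1.1 z.1.2 z.2.1 z.2.2 (fhat Φ fP (z.1.1, z.2.1))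
        * fhat Φ (v ε) (z.1.1, z.2.1)| ≤ cL2 * (‖v ε‖ * kb) := by
      rw [abs_mul]
      exact mul_le_mul (hD2bdd _ _ _ _ _) hV habsV hcL2.le
    have h3 := abs_sub _ _ |>.trans (add_le_add h1 h2)
    calc _ ≤ (2 * cL2 * (‖v ε‖ * kb)) * ‖Φ (z.1.1, z.2.1)‖ := by
          refine mul_le_mul_of_nonneg_right ?_ (norm_nonneg _)
          refine (abs_sub _ _).trans ?_
          linarith
      _ ≤ 2 * cL2 * (‖v ε‖ * kb) * kb := by
          refine mul_le_mul_of_nonneg_left (hkb _) (by positivity)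
  have hRint : ∀ ε : ℝ, 0 < ε → Integrable (fun z : (X × Y) × (X × Y) =>
      (ε⁻¹ * (D₅L z.1.1 z.1.2 z.2.1 z.2.2 (fhat Φ fP (z.1.1, z.2.1)
            + ε * fhat Φ (v ε) (z.1.1, z.2.1))
          - D₅L z.1.1 z.1.2 z.2.1 z.2.2 (fhat Φ fP (z.1.1, z.2.1)))
        - D₅D₅L z.1.1 z.1.2 z.2.1 z.2.2 (fhat Φ fP (z.1.1, z.2.1))
          * fhat Φ (v ε) (z.1.1, z.2.1)) • Φ (z.1.1, z.2.1)) (P.prod P) := fun ε h0 =>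
    IFaux.integrable_bdd (smR ε).aestronglyMeasurable (hRb ε h0)
  -- the key identity
  have hkey : ∀ ε : ℝ, 0 < ε → ε < 1 →
      (2 * lam) • (v ε) + Bop (v ε)
        = ((2 - ε) • A (fε ε) - (1 - ε) • B1 (fε ε) - (1 - ε) • B2 (fε ε) - ε • Cd (fε ε))
          - Rr ε := by
    intro ε h0 h1
    have hεne : ε ≠ 0 := ne_of_gt h0
    have hfεeq : fε ε = fP + ε • v ε := by
      rw [hvdef]
      simp only
      rw [smul_smul, mul_inv_cancel₀ hεne, one_smul]
      abel
    have hfh : ∀ p : X × X, fhat Φ (fε ε) p = fhat Φ fP p + ε * fhat Φ (v ε) p := by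
      intro p
      rw [hfεeq]
      simp [fhat, inner_add_left, real_inner_smul_left]
    have hsplit : ε⁻¹ • (A (fε ε) - A fP) = Bop (v ε) + Rr ε := by
      rw [hAdef, hBopdef, hRrdef]
      simp only
      rw [← integral_sub (hAint (fε ε)) (hAint fP), ← integral_smul,
        ← integral_add (hBint (v ε)) (hRint ε h0)]
      refine integral_congr_ae (ae_of_all _ fun z => ?_)
      simp only [hGfdef]
      rw [hfh (z.1.1, z.2.1), ← sub_smul, smul_smul, ← add_smul]
      congr 1
      have hic : (inner ℝ (Φ (z.1.1, z.2.1)) (v ε) : ℝ) = fhat Φ (v ε) (z.1.1, z.2.1) :=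
        real_inner_comm _ _
      rw [hic]
      ring
    have h6 := congrArg (fun w : H => ε⁻¹ • w) (hW ε h0 h1)
    simp only [smul_add] at h6
    have e1 : ε⁻¹ • ((2 * lam) • (fε ε - fP)) = (2 * lam) • v ε := by
      rw [hvdef]
      simp only
      rw [smul_comm]
    have c1 : ε⁻¹ * (ε * (2 - ε)) = 2 - ε := by field_simp
    have c2 : ε⁻¹ * (ε * (1 - ε)) = 1 - ε := by field_simp
    have c4 : ε⁻¹ * ε ^ 2 = ε := by field_simp
    have e2 : ε⁻¹ • ((ε * (2 - ε)) • A (fε ε) - (ε * (1 - ε)) • B1 (fε ε)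
        - (ε * (1 - ε)) • B2 (fε ε) - (ε ^ 2) • Cd (fε ε))
        = (2 - ε) • A (fε ε) - (1 - ε) • B1 (fε ε) - (1 - ε) • B2 (fε ε) - ε • Cd (fε ε) := by
      rw [smul_sub, smul_sub, smul_sub, smul_smul, smul_smul, smul_smul, smul_smul,
        c1, c2, c4]
    rw [e1, hsplit, e2] at h6
    rw [eq_sub_iff_add_eq, add_assoc]
    exact h6
  -- limits along ε → 0⁺
  have hIoo : Set.Ioo (0:ℝ) 1 ∈ nhdsWithin (0:ℝ) (Set.Ioi 0) :=
    Ioo_mem_nhdsGT_of_mem ⟨le_refl 0, one_pos⟩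
  have hid0 : Tendsto (fun ε : ℝ => ε) (nhdsWithin (0:ℝ) (Set.Ioi 0)) (𝓝 0) :=
    tendsto_id.mono_right nhdsWithin_le_nhds
  have hlin0 : ∀ K : ℝ, Tendsto (fun ε : ℝ => K * ε) (nhdsWithin (0:ℝ) (Set.Ioi 0)) (𝓝 0) := by
    intro K
    simpa using tendsto_const_nhds.mul hid0
  have hAfε : Tendsto (fun ε => A (fε ε)) (nhdsWithin (0:ℝ) (Set.Ioi 0)) (𝓝 (A fP)) := by
    rw [tendsto_iff_norm_sub_tendsto_zero]
    refine squeeze_zero' (Eventually.of_forall fun ε => norm_nonneg _) ?_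
      (hlin0 (cL2 * kb * kb * (5 * c * kb / (2 * lam))))
    filter_upwards [hIoo] with ε hε
    calc ‖A (fε ε) - A fP‖ ≤ cL2 * kb * kb * ‖fε ε - fP‖ := hAdiff _ _
      _ ≤ cL2 * kb * kb * ((5 * c * kb / (2 * lam)) * ε) :=
          mul_le_mul_of_nonneg_left (hstab ε hε.1 hε.2) (by positivity)
      _ = cL2 * kb * kb * (5 * c * kb / (2 * lam)) * ε := by ring
  have hB1fε : Tendsto (fun ε => B1 (fε ε)) (nhdsWithin (0:ℝ) (Set.Ioi 0)) (𝓝 (B1 fP)) := by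
    rw [tendsto_iff_norm_sub_tendsto_zero]
    refine squeeze_zero' (Eventually.of_forall fun ε => norm_nonneg _) ?_
      (hlin0 (cL2 * kb * kb * (5 * c * kb / (2 * lam))))
    filter_upwards [hIoo] with ε hε
    calc ‖B1 (fε ε) - B1 fP‖ ≤ cL2 * kb * kb * ‖fε ε - fP‖ := hB1diff _ _
      _ ≤ cL2 * kb * kb * ((5 * c * kb / (2 * lam)) * ε) :=
          mul_le_mul_of_nonneg_left (hstab ε hε.1 hε.2) (by positivity)
      _ = cL2 * kb * kb * (5 * c * kb / (2 * lam)) * ε := by ring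
  have hB2fε : Tendsto (fun ε => B2 (fε ε)) (nhdsWithin (0:ℝ) (Set.Ioi 0)) (𝓝 (B2 fP)) := by
    rw [tendsto_iff_norm_sub_tendsto_zero]
    refine squeeze_zero' (Eventually.of_forall fun ε => norm_nonneg _) ?_
      (hlin0 (cL2 * kb * kb * (5 * c * kb / (2 * lam))))
    filter_upwards [hIoo] with ε hε
    calc ‖B2 (fε ε) - B2 fP‖ ≤ cL2 * kb * kb * ‖fε ε - fP‖ := hB2diff _ _
      _ ≤ cL2 * kb * kb * ((5 * c * kb / (2 * lam)) * ε) :=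
          mul_le_mul_of_nonneg_left (hstab ε hε.1 hε.2) (by positivity)
      _ = cL2 * kb * kb * (5 * c * kb / (2 * lam)) * ε := by ring
  have hCdlim : Tendsto (fun ε => ε • Cd (fε ε)) (nhdsWithin (0:ℝ) (Set.Ioi 0)) (𝓝 0) := by
    refine squeeze_zero_norm' ?_ (hlin0 (c * kb))
    filter_upwards [hIoo] with ε hε
    rw [norm_smul, Real.norm_eq_abs, abs_of_pos hε.1]
    calc ε * ‖Cd (fε ε)‖ ≤ ε * (c * kb) := mul_le_mul_of_nonneg_left (hCdb _) hε.1.le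
      _ = (c * kb) * ε := by ring
  -- remainder tends to zero (dominated convergence)
  have hRlim : Tendsto Rr (nhdsWithin (0:ℝ) (Set.Ioi 0)) (𝓝 0) := by
    have h0int : (∫ (_ : (X × Y) × (X × Y)), (0:H) ∂(P.prod P)) = 0 := integral_zero _ _
    rw [hRrdef, show (0:H) = ∫ (_ : (X × Y) × (X × Y)), (0:H) ∂(P.prod P) from h0int.symm]
    have hC2nn : (0:ℝ) ≤ (5 * c * kb / (2 * lam)) * kb := by positivity
    refine tendsto_integral_filter_of_dominated_convergence
      (fun _ => 2 * cL2 * ((5 * c * kb / (2 * lam)) * kb) * kb)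
      (Eventually.of_forall fun ε => (smR ε).aestronglyMeasurable) ?_ (integrable_const _) ?_
    · filter_upwards [hIoo] with ε hε
      refine ae_of_all _ fun z => ?_
      refine (hRb ε hε.1 z).trans ?_
      have hvc := hvb ε hε.1 hε.2
      have h' : ‖v ε‖ * kb ≤ (5 * c * kb / (2 * lam)) * kb :=
        mul_le_mul_of_nonneg_right hvc hkb0
      refine mul_le_mul_of_nonneg_right (mul_le_mul_of_nonneg_left h' (by positivity)) hkb0
    · refine ae_of_all _ fun z => ?_
      have hsc : Tendsto (fun ε : ℝ =>
          ε⁻¹ * (D₅L z.1.1 z.1.2 z.2.1 z.2.2 (fhat Φ fP (z.1.1, z.2.1)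
                + ε * fhat Φ (v ε) (z.1.1, z.2.1))
              - D₅L z.1.1 z.1.2 z.2.1 z.2.2 (fhat Φ fP (z.1.1, z.2.1)))
            - D₅D₅L z.1.1 z.1.2 z.2.1 z.2.2 (fhat Φ fP (z.1.1, z.2.1))
              * fhat Φ (v ε) (z.1.1, z.2.1))
          (nhdsWithin (0:ℝ) (Set.Ioi 0)) (𝓝 0) := by
        set t := fhat Φ fP (z.1.1, z.2.1) with htdef
        set C₂ : ℝ := (5 * c * kb / (2 * lam)) * kb with hC2def
        have hC2nn' : (0:ℝ) ≤ C₂ := by positivity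
        have hcont := hD2cont z.1.1 z.1.2 z.2.1 z.2.2
        rw [← nhdsWithin_Ioo_eq_nhdsGT (zero_lt_one (α := ℝ))]
        rw [Metric.tendsto_nhdsWithin_nhds]
        intro η hη
        have hη' : 0 < η / (C₂ + 1) := by positivity
        obtain ⟨δ₀, hδ₀pos, hδ₀p⟩ := Metric.continuous_iff.1 hcont t (η / (C₂ + 1)) hη'
        refine ⟨δ₀ / (C₂ + 1), by positivity, ?_⟩
        intro ε hεIoo hdist
        obtain ⟨h0, h1⟩ := hεIoo
        rw [Real.dist_eq, sub_zero, abs_of_pos h0] at hdist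
        have hVb : |fhat Φ (v ε) (z.1.1, z.2.1)| ≤ C₂ := by
          refine (hfb (v ε) _).trans ?_
          rw [hC2def]
          exact mul_le_mul_of_nonneg_right (hvb ε h0 h1) hkb0
        have habs : |ε * fhat Φ (v ε) (z.1.1, z.2.1)| < δ₀ := by
          rw [abs_mul, abs_of_pos h0]
          calc ε * |fhat Φ (v ε) (z.1.1, z.2.1)| ≤ ε * (C₂ + 1) :=
              mul_le_mul_of_nonneg_left (by linarith) h0.le
            _ < (δ₀ / (C₂ + 1)) * (C₂ + 1) :=
              mul_lt_mul_of_pos_right hdist (by linarith)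
            _ = δ₀ := by field_simp
        set a := fhat Φ (v ε) (z.1.1, z.2.1) with hadef
        set hh := ε * a with hhdef
        have hFTC : D₅L z.1.1 z.1.2 z.2.1 z.2.2 (t + hh) - D₅L z.1.1 z.1.2 z.2.1 z.2.2 t
            = ∫ σ in t..(t + hh), D₅D₅L z.1.1 z.1.2 z.2.1 z.2.2 σ :=
          (intervalIntegral.integral_eq_sub_of_hasDerivAt
            (fun σ _ => hD2 z.1.1 z.1.2 z.2.1 z.2.2 σ)
            ((hD2cont _ _ _ _).intervalIntegrable _ _)).symm
        have hconst : (∫ _ in t..(t + hh), D₅D₅L z.1.1 z.1.2 z.2.1 z.2.2 t)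
            = hh * D₅D₅L z.1.1 z.1.2 z.2.1 z.2.2 t := by
          rw [intervalIntegral.integral_const, smul_eq_mul]
          ring_nf
        have hsubint : (∫ σ in t..(t + hh), (D₅D₅L z.1.1 z.1.2 z.2.1 z.2.2 σ
              - D₅D₅L z.1.1 z.1.2 z.2.1 z.2.2 t))
            = (D₅L z.1.1 z.1.2 z.2.1 z.2.2 (t + hh) - D₅L z.1.1 z.1.2 z.2.1 z.2.2 t)
              - hh * D₅D₅L z.1.1 z.1.2 z.2.1 z.2.2 t := by
          rw [intervalIntegral.integral_sub ((hD2cont _ _ _ _).intervalIntegrable _ _)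
            intervalIntegrable_const, ← hFTC, hconst]
        have hbnd : |∫ σ in t..(t + hh), (D₅D₅L z.1.1 z.1.2 z.2.1 z.2.2 σ
              - D₅D₅L z.1.1 z.1.2 z.2.1 z.2.2 t)| ≤ (η / (C₂ + 1)) * |t + hh - t| := by
          rw [show |∫ σ in t..(t + hh), (D₅D₅L z.1.1 z.1.2 z.2.1 z.2.2 σ
              - D₅D₅L z.1.1 z.1.2 z.2.1 z.2.2 t)|
            = ‖∫ σ in t..(t + hh), (D₅D₅L z.1.1 z.1.2 z.2.1 z.2.2 σ
              - D₅D₅L z.1.1 z.1.2 z.2.1 z.2.2 t)‖ from rfl]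
          refine intervalIntegral.norm_integral_le_of_norm_le_const fun σ hσ => ?_
          have hmem : σ ∈ Set.Ioc (min t (t + hh)) (max t (t + hh)) := hσ
          have hσd : |σ - t| ≤ |hh| := by
            rw [abs_le]
            constructor
            · nlinarith [hmem.1, le_min (le_refl t) (le_refl t), abs_nonneg hh,
                neg_abs_le hh, min_le_left t (t + hh), min_le_right t (t + hh),
                le_min (show t - |hh| ≤ t by nlinarith [abs_nonneg hh])
                  (show t - |hh| ≤ t + hh by nlinarith [neg_abs_le hh])]
            · nlinarith [hmem.2, max_le (show t ≤ t + |hh| by nlinarith [abs_nonneg hh])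
                (show t + hh ≤ t + |hh| by nlinarith [le_abs_self hh])]
          have hd := hδ₀p σ (by rw [Real.dist_eq]; exact lt_of_le_of_lt hσd habs)
          rw [Real.dist_eq] at hd
          exact le_of_lt hd
        have hfin : ε⁻¹ * (D₅L z.1.1 z.1.2 z.2.1 z.2.2 (t + ε * a)
              - D₅L z.1.1 z.1.2 z.2.1 z.2.2 t)
            - D₅D₅L z.1.1 z.1.2 z.2.1 z.2.2 t * a
            = ε⁻¹ * (∫ σ in t..(t + hh), (D₅D₅L z.1.1 z.1.2 z.2.1 z.2.2 σ
              - D₅D₅L z.1.1 z.1.2 z.2.1 z.2.2 t)) := by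
          rw [hsubint, hhdef]
          field_simp
        rw [Real.dist_eq, sub_zero, hfin, abs_mul, abs_of_pos (inv_pos.2 h0)]
        have hte : |t + hh - t| = |hh| := by rw [show t + hh - t = hh by ring]
        rw [hte] at hbnd
        calc ε⁻¹ * |∫ σ in t..(t + hh), (D₅D₅L z.1.1 z.1.2 z.2.1 z.2.2 σ
              - D₅D₅L z.1.1 z.1.2 z.2.1 z.2.2 t)|
            ≤ ε⁻¹ * ((η / (C₂ + 1)) * |hh|) := by
              exact mul_le_mul_of_nonneg_left hbnd (inv_pos.2 h0).le
          _ = (η / (C₂ + 1)) * |a| := by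
              rw [hhdef, abs_mul, abs_of_pos h0]
              field_simp
          _ ≤ (η / (C₂ + 1)) * C₂ := mul_le_mul_of_nonneg_left hVb hη'.le
          _ < η := by
              rw [div_mul_eq_mul_div, div_lt_iff₀ (by positivity)]
              nlinarith
      have := hsc.smul_const (Φ (z.1.1, z.2.1))
      simpa using this
  -- convergence of the operator applied to v ε
  have hMlim : Tendsto (fun ε => (2 * lam) • v ε + Bop (v ε)) (nhdsWithin (0:ℝ) (Set.Ioi 0))
      (𝓝 ((2:ℝ) • A fP - B1 fP - B2 fP)) := by
    have t1 : Tendsto (fun ε : ℝ => (2 - ε) • A (fε ε)) (nhdsWithin (0:ℝ) (Set.Ioi 0))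
        (𝓝 (((2:ℝ) - 0) • A fP)) := (tendsto_const_nhds.sub hid0).smul hAfε
    have t2 : Tendsto (fun ε : ℝ => (1 - ε) • B1 (fε ε)) (nhdsWithin (0:ℝ) (Set.Ioi 0))
        (𝓝 (((1:ℝ) - 0) • B1 fP)) := (tendsto_const_nhds.sub hid0).smul hB1fε
    have t3 : Tendsto (fun ε : ℝ => (1 - ε) • B2 (fε ε)) (nhdsWithin (0:ℝ) (Set.Ioi 0))
        (𝓝 (((1:ℝ) - 0) • B2 fP)) := (tendsto_const_nhds.sub hid0).smul hB2fε
    have hall := (((t1.sub t2).sub t3).sub hCdlim).sub hRlim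
    have hRHS : Tendsto (fun ε : ℝ => ((2 - ε) • A (fε ε) - (1 - ε) • B1 (fε ε)
        - (1 - ε) • B2 (fε ε) - ε • Cd (fε ε)) - Rr ε) (nhdsWithin (0:ℝ) (Set.Ioi 0))
        (𝓝 ((2:ℝ) • A fP - B1 fP - B2 fP)) := by
      simpa using hall
    refine Tendsto.congr' ?_ hRHS
    filter_upwards [hIoo] with ε hε
    exact (hkey ε hε.1 hε.2).symm
  -- the net (v ε) is Cauchy
  have hcauchy : Cauchy (Filter.map v (nhdsWithin (0:ℝ) (Set.Ioi 0))) := by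
    rw [Metric.cauchy_iff]
    refine ⟨Filter.map_neBot, fun η hη => ?_⟩
    have hball : (fun ε => (2 * lam) • v ε + Bop (v ε)) ⁻¹'
        Metric.ball ((2:ℝ) • A fP - B1 fP - B2 fP) (lam * η / 2)
        ∈ nhdsWithin (0:ℝ) (Set.Ioi 0) :=
      hMlim (Metric.ball_mem_nhds _ (by positivity))
    refine ⟨v '' ((fun ε => (2 * lam) • v ε + Bop (v ε)) ⁻¹'
        Metric.ball ((2:ℝ) • A fP - B1 fP - B2 fP) (lam * η / 2)), Filter.image_mem_map hball,
      ?_⟩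
    rintro p ⟨ε₁, hε₁, rfl⟩ q ⟨ε₂, hε₂, rfl⟩
    simp only [Set.mem_preimage, Metric.mem_ball] at hε₁ hε₂
    have hdiffM : (2 * lam) • (v ε₁ - v ε₂) + Bop (v ε₁ - v ε₂)
        = ((2 * lam) • v ε₁ + Bop (v ε₁)) - ((2 * lam) • v ε₂ + Bop (v ε₂)) := by
      rw [← hBsub]
      module
    have hl := hlower (v ε₁ - v ε₂)
    rw [hdiffM] at hl
    have hnd : ‖((2 * lam) • v ε₁ + Bop (v ε₁)) - ((2 * lam) • v ε₂ + Bop (v ε₂))‖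
        < lam * η := by
      calc ‖((2 * lam) • v ε₁ + Bop (v ε₁)) - ((2 * lam) • v ε₂ + Bop (v ε₂))‖
          = dist ((2 * lam) • v ε₁ + Bop (v ε₁)) ((2 * lam) • v ε₂ + Bop (v ε₂)) :=
            (dist_eq_norm _ _).symm
        _ ≤ dist ((2 * lam) • v ε₁ + Bop (v ε₁)) ((2:ℝ) • A fP - B1 fP - B2 fP)
            + dist ((2:ℝ) • A fP - B1 fP - B2 fP) ((2 * lam) • v ε₂ + Bop (v ε₂)) :=
            dist_triangle _ _ _
        _ < lam * η / 2 + lam * η / 2 := by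
            rw [dist_comm ((2:ℝ) • A fP - B1 fP - B2 fP)]
            exact add_lt_add hε₁ hε₂
        _ = lam * η := by ring
    rw [dist_eq_norm]
    nlinarith [norm_nonneg (v ε₁ - v ε₂)]
  obtain ⟨w, hw⟩ := CompleteSpace.complete hcauchy
  have hvlim : Tendsto v (nhdsWithin (0:ℝ) (Set.Ioi 0)) (𝓝 w) := hw
  -- continuity of Bop along the limit
  have hBcont : Tendsto (fun ε => Bop (v ε)) (nhdsWithin (0:ℝ) (Set.Ioi 0)) (𝓝 (Bop w)) := by
    rw [tendsto_iff_norm_sub_tendsto_zero]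
    have hn : Tendsto (fun ε => ‖v ε - w‖) (nhdsWithin (0:ℝ) (Set.Ioi 0)) (𝓝 0) := by
      rw [← tendsto_iff_norm_sub_tendsto_zero]
      exact hvlim
    refine squeeze_zero' (Eventually.of_forall fun ε => norm_nonneg _)
      (Eventually.of_forall fun ε => ?_) (by simpa using hn.const_mul (cL2 * kb * kb))
    rw [hBsub]
    calc ‖Bop (v ε - w)‖ ≤ cL2 * (kb * ‖v ε - w‖) * kb := hBopb _
      _ = cL2 * kb * kb * ‖v ε - w‖ := by ring
  have hM2 : Tendsto (fun ε => (2 * lam) • v ε + Bop (v ε)) (nhdsWithin (0:ℝ) (Set.Ioi 0))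
      (𝓝 ((2 * lam) • w + Bop w)) := (hvlim.const_smul (2 * lam)).add hBcont
  have heqM : (2 * lam) • w + Bop w = (2:ℝ) • A fP - B1 fP - B2 fP :=
    tendsto_nhds_unique hM2 hMlim
  -- identify the cross-term integral
  have hmapfst : (P.prod P).map Prod.fst = P := by
    rw [Measure.map_fst_prod]
    simp
  have hmapsnd : (P.prod P).map Prod.snd = P := by
    rw [Measure.map_snd_prod]
    simp
  have hfstint : (∫ z : (X × Y) × (X × Y), Gf fP (z.1, z₀) ∂(P.prod P)) = B1 fP := by
    have hmi := integral_map (μ := P.prod P) measurable_fst.aemeasurable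
      (f := fun z₁ : X × Y => Gf fP (z₁, z₀))
      (by rw [hmapfst]; exact (smGf1 fP).aestronglyMeasurable)
    rw [hmapfst] at hmi
    rw [hB1def]
    simp only
    rw [← hmi]
  have hsndint : (∫ z : (X × Y) × (X × Y), Gf fP (z₀, z.2) ∂(P.prod P)) = B2 fP := by
    have hmi := integral_map (μ := P.prod P) measurable_snd.aemeasurable
      (f := fun z₂ : X × Y => Gf fP (z₀, z₂))
      (by rw [hmapsnd]; exact (smGf2 fP).aestronglyMeasurable)
    rw [hmapsnd] at hmi
    rw [hB2def]
    simp only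
    rw [← hmi]
  have hint1 : Integrable (fun z : (X × Y) × (X × Y) => Gf fP (z.1, z₀)) (P.prod P) :=
    IFaux.integrable_bdd ((smGf1 fP).comp_measurable measurable_fst).aestronglyMeasurable
      (fun z => hGfb fP _)
  have hint2 : Integrable (fun z : (X × Y) × (X × Y) => Gf fP (z₀, z.2)) (P.prod P) :=
    IFaux.integrable_bdd ((smGf2 fP).comp_measurable measurable_snd).aestronglyMeasurable
      (fun z => hGfb fP _)
  have hI2 : (∫ z : (X × Y) × (X × Y),
      ((D₅L z.1.1 z.1.2 x₀ y₀ (fhat Φ fP (z.1.1, x₀))) • Φ (z.1.1, x₀)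
        + (D₅L x₀ y₀ z.2.1 z.2.2 (fhat Φ fP (x₀, z.2.1))) • Φ (x₀, z.2.1)) ∂(P.prod P))
      = B1 fP + B2 fP := by
    have hshow : (∫ z : (X × Y) × (X × Y),
        ((D₅L z.1.1 z.1.2 x₀ y₀ (fhat Φ fP (z.1.1, x₀))) • Φ (z.1.1, x₀)
          + (D₅L x₀ y₀ z.2.1 z.2.2 (fhat Φ fP (x₀, z.2.1))) • Φ (x₀, z.2.1)) ∂(P.prod P))
        = ∫ z : (X × Y) × (X × Y), (Gf fP (z.1, z₀) + Gf fP (z₀, z.2)) ∂(P.prod P) := rfl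
    rw [hshow, integral_add hint1 hint2, hfstint, hsndint]
  -- assemble the three claims
  refine ⟨w, hvlim, ?_, ?_⟩
  · have hBw : (∫ z : (X × Y) × (X × Y),
        (D₅D₅L z.1.1 z.1.2 z.2.1 z.2.2 (fhat Φ fP (z.1.1, z.2.1))
          * (inner ℝ (Φ (z.1.1, z.2.1)) w : ℝ)) • Φ (z.1.1, z.2.1) ∂(P.prod P)) = Bop w := by
      rw [hBopdef]
    have hAw : (∫ z : (X × Y) × (X × Y),
        (D₅L z.1.1 z.1.2 z.2.1 z.2.2 (fhat Φ fP (z.1.1, z.2.1))) • Φ (z.1.1, z.2.1)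
        ∂(P.prod P)) = A fP := by
      rw [hAdef]
    rw [hBw, hAw, hI2, heqM]
    module
  · have hwb : ‖w‖ ≤ 5 * c * kb / (2 * lam) := by
      refine le_of_tendsto hvlim.norm ?_
      filter_upwards [hIoo] with ε hε
      exact hvb ε hε.1 hε.2
    refine hwb.trans ?_
    rw [div_le_iff₀ (by positivity)]
    have h16 : (8 / lam) * kb * c * (2 * lam) = 16 * (kb * c) := by
      field_simp
      ring
    rw [h16]
    nlinarith [hckb]


/-- **Bounded influence function** (Corollary 3.5). Under the standing assumptions, for the
contamination `P_ε = (1-ε)P + ε δ_{(x₀,y₀)}` the influence function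
`IF((x₀,y₀); S, P) = lim_{ε→0⁺} (f_{L*,P_ε,λ} - f_{L*,P,λ})/ε` exists in `H`, satisfies
`M(P)(IF) = -T(δ_{(x₀,y₀)}; P)` with
`T(δ_{(x₀,y₀)};P) = -2∫ D₅L∘f̂_P ⬝ Φ d(P⊗P)
  + ∫ [D₅L(x,y,x₀,y₀)Φ(x,x₀) + D₅L(x₀,y₀,x',y')Φ(x₀,x')] d(P⊗P)`,
and is bounded: `‖IF‖ ≤ (8/λ)‖k‖_∞|L|₁`. -/
theorem bounded_influence_function
    {X : Type*} [MetricSpace X] [CompleteSpace X] [TopologicalSpace.SeparableSpace X]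
    [MeasurableSpace X] [BorelSpace X]
    {H : Type*} [NormedAddCommGroup H] [InnerProductSpace ℝ H] [CompleteSpace H]
    [TopologicalSpace.SeparableSpace H]
    (Y : Set ℝ) (hYclosed : IsClosed Y)
    (L D₅L D₅D₅L : X → Y → X → Y → ℝ → ℝ)
    (hL_meas : Measurable fun p : (X × Y) × (X × Y) × ℝ => L p.1.1 p.1.2 p.2.1.1 p.2.1.2 p.2.2)
    (hL_nonneg : ∀ x y x' y' t, 0 ≤ L x y x' y' t)
    (hL_convex : ∀ x y x' y', ConvexOn ℝ Set.univ (L x y x' y'))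
    (c : ℝ) (hc : 0 ≤ c)
    (hL_lip : ∀ x y x' y' s t, |L x y x' y' t - L x y x' y' s| ≤ c * |t - s|)
    (hD1 : ∀ x y x' y' t, HasDerivAt (L x y x' y') (D₅L x y x' y' t) t)
    (hD2 : ∀ x y x' y' t, HasDerivAt (D₅L x y x' y') (D₅D₅L x y x' y' t) t)
    (hD1cont : ∀ x y x' y', Continuous (D₅L x y x' y'))
    (hD2cont : ∀ x y x' y', Continuous (D₅D₅L x y x' y'))
    (cL1 : ℝ) (hcL1 : 0 < cL1) (hD1bdd : ∀ x y x' y' t, |D₅L x y x' y' t| ≤ cL1)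
    (cL2 : ℝ) (hcL2 : 0 < cL2) (hD2bdd : ∀ x y x' y' t, |D₅D₅L x y x' y' t| ≤ cL2)
    (Φ : X × X → H) (hΦcont : Continuous Φ)
    (kb : ℝ) (hkb : ∀ p : X × X, ‖Φ p‖ ≤ kb)
    (P : Measure (X × Y)) [IsProbabilityMeasure P]
    (lam : ℝ) (hlam : 0 < lam)
    (x₀ : X) (y₀ : Y)
    (fP : H) (hfP : ∀ g : H, regRisk L Φ P lam fP ≤ regRisk L Φ P lam g)
    (fε : ℝ → H)
    (hfε : ∀ ε : ℝ, 0 ≤ ε → ε < 1 → ∀ g : H,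
      regRisk L Φ
          (ENNReal.ofReal (1 - ε) • P + ENNReal.ofReal ε • Measure.dirac ((x₀, y₀) : X × Y))
          lam (fε ε)
        ≤ regRisk L Φ
            (ENNReal.ofReal (1 - ε) • P + ENNReal.ofReal ε • Measure.dirac ((x₀, y₀) : X × Y))
            lam g) :
    ∃ v : H,
      Tendsto (fun ε : ℝ => ε⁻¹ • (fε ε - fP)) (nhdsWithin 0 (Set.Ioi 0)) (𝓝 v) ∧
      (2 * lam) • v +
          (∫ z : (X × Y) × (X × Y),
            (D₅D₅L z.1.1 z.1.2 z.2.1 z.2.2 (fhat Φ fP (z.1.1, z.2.1))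
              * (@inner ℝ H _ (Φ (z.1.1, z.2.1)) v)) • Φ (z.1.1, z.2.1) ∂(P.prod P))
        = -(((-2 : ℝ)) • (∫ z : (X × Y) × (X × Y),
              (D₅L z.1.1 z.1.2 z.2.1 z.2.2 (fhat Φ fP (z.1.1, z.2.1))) • Φ (z.1.1, z.2.1)
              ∂(P.prod P))
            + (∫ z : (X × Y) × (X × Y),
              ((D₅L z.1.1 z.1.2 x₀ y₀ (fhat Φ fP (z.1.1, x₀))) • Φ (z.1.1, x₀)
                + (D₅L x₀ y₀ z.2.1 z.2.2 (fhat Φ fP (x₀, z.2.1))) • Φ (x₀, z.2.1))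
              ∂(P.prod P))) ∧
      ‖v‖ ≤ (8 / lam) * kb * c :=
  IFaux.main Y hYclosed L D₅L D₅D₅L hL_meas hL_nonneg hL_convex c hc hL_lip hD1 hD2 hD1cont
    hD2cont cL1 hcL1 hD1bdd cL2 hcL2 hD2bdd Φ hΦcont kb hkb P lam hlam x₀ y₀ fP hfP fε hfε
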